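/- Given a continuous function f on [0,∞) with f(0) ≥ 0, the function L(t) = max(0, max_{0≤s≤t}(-f(s))) is the unique continuous function satisfying: (1) x(t) := f(t) + L(t) ≥ 0 for all t; (2) L(0) = 0 and L is nondecreasing; (3) L is flat off the zero set of x, i.e., L is constant on any interval where x > 0. -/

import Mathlib

open Set

/-- The Skorohod reflection term `Lf(t) = max(0, max_{0 ≤ s ≤ t} (-f(s)))`. -/
noncomputable def skorohodL (f : ℝ → ℝ) (t : ℝ) : ℝ :=
  max 0 (sSup ((fun s => -f s) '' Icc 0 t))

private lemma negimg_bdd {f : ℝ → ℝ} (hf : ContinuousOn f (Ici 0)) {a b : ℝ} (ha : 0 ≤ a) :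
    BddAbove ((fun s => -f s) '' Icc a b) :=
  (isCompact_Icc.image_of_continuousOn
    ((hf.mono (fun _ hx => le_trans ha hx.1)).neg)).bddAbove

private lemma skorohodL_nonneg {f : ℝ → ℝ} (hf : ContinuousOn f (Ici 0)) :
    ∀ t ≥ 0, 0 ≤ f t + skorohodL f t := by
  intro t ht
  have h : -f t ≤ skorohodL f t :=
    le_trans (le_csSup (negimg_bdd hf le_rfl) ⟨t, ⟨ht, le_rfl⟩, rfl⟩) (le_max_right _ _)
  linarith

private lemma skorohodL_zero {f : ℝ → ℝ} (hf0 : 0 ≤ f 0) : skorohodL f 0 = 0 := by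
  have h : skorohodL f 0 = max 0 (-f 0) := by
    rw [skorohodL, Icc_self, image_singleton, csSup_singleton]
  rw [h, max_eq_left (by linarith)]

private lemma skorohodL_mono {f : ℝ → ℝ} (hf : ContinuousOn f (Ici 0)) :
    MonotoneOn (skorohodL f) (Ici 0) := by
  intro u hu v hv huv
  refine max_le_max le_rfl ?_
  exact csSup_le_csSup (negimg_bdd hf le_rfl) ((nonempty_Icc.mpr hu).image _)
    (image_mono (Icc_subset_Icc le_rfl huv))

private lemma skorohodL_flat {f : ℝ → ℝ} (hf : ContinuousOn f (Ici 0)) :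
    ∀ a b, 0 ≤ a → a ≤ b → (∀ t ∈ Icc a b, 0 < f t + skorohodL f t) →
      skorohodL f b = skorohodL f a := by
  intro a b ha hab hpos
  by_contra hne
  have hb : 0 ≤ b := le_trans ha hab
  have hlt : skorohodL f a < skorohodL f b :=
    lt_of_le_of_ne (skorohodL_mono hf ha hb hab) (Ne.symm hne)
  set A := sSup ((fun s => -f s) '' Icc 0 a) with hA
  set B := sSup ((fun s => -f s) '' Icc a b) with hB
  have hunion : Icc (0:ℝ) b = Icc 0 a ∪ Icc a b := (Icc_union_Icc_eq_Icc ha hab).symm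
  have hsup : sSup ((fun s => -f s) '' Icc 0 b) = max A B := by
    rw [hunion, image_union]
    exact csSup_union (negimg_bdd hf le_rfl) ((nonempty_Icc.mpr ha).image _)
      (negimg_bdd hf ha) ((nonempty_Icc.mpr hab).image _)
  have hsplit : skorohodL f b = max (skorohodL f a) B := by
    rw [skorohodL, hsup, skorohodL, max_assoc]
  have hBb : skorohodL f b = B := by
    rcases le_or_gt B (skorohodL f a) with h | h
    · rw [hsplit, max_eq_left h] at hlt; exact absurd hlt (lt_irrefl _)
    · rw [hsplit, max_eq_right h.le]
  obtain ⟨s, hs, hmax⟩ := isCompact_Icc.exists_isMaxOn (nonempty_Icc.mpr hab)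
    ((hf.mono (fun _ hx => le_trans ha hx.1)).neg)
  have hs0 : 0 ≤ s := le_trans ha hs.1
  have hBval : B = -f s := by
    refine le_antisymm (csSup_le ((nonempty_Icc.mpr hab).image _) ?_)
      (le_csSup (negimg_bdd hf ha) ⟨s, hs, rfl⟩)
    rintro x ⟨y, hy, rfl⟩
    exact hmax hy
  have h1 : -f s ≤ skorohodL f s :=
    le_trans (le_csSup (negimg_bdd hf le_rfl) ⟨s, ⟨hs0, le_rfl⟩, rfl⟩) (le_max_right _ _)
  have h2 : skorohodL f s ≤ skorohodL f b := skorohodL_mono hf hs0 hb hs.2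
  have := hpos s hs
  rw [hBb] at h2
  rw [hBval] at h2
  linarith

private lemma runSup_continuousOn {g : ℝ → ℝ} (hg : ContinuousOn g (Ici 0)) :
    ContinuousOn (fun t => sSup (g '' Icc 0 t)) (Ici 0) := by
  intro t₀ ht₀
  have hbdd : ∀ t : ℝ, BddAbove (g '' Icc 0 t) := fun t =>
    (isCompact_Icc.image_of_continuousOn (hg.mono Icc_subset_Ici_self)).bddAbove
  have hmono : ∀ u v : ℝ, 0 ≤ u → u ≤ v → sSup (g '' Icc 0 u) ≤ sSup (g '' Icc 0 v) := by
    intro u v hu huv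
    exact csSup_le_csSup (hbdd v) ((nonempty_Icc.mpr hu).image _)
      (image_mono (Icc_subset_Icc le_rfl huv))
  rw [Metric.continuousWithinAt_iff]
  intro ε hε
  have hUC := isCompact_Icc.uniformContinuousOn_of_continuous
    (hg.mono (Icc_subset_Ici_self : Icc (0:ℝ) (t₀+1) ⊆ Ici 0))
  rw [Metric.uniformContinuousOn_iff] at hUC
  obtain ⟨δ, hδ, hδ'⟩ := hUC (ε/2) (by linarith)
  refine ⟨min δ 1, lt_min hδ one_pos, ?_⟩
  intro t ht hdist
  have hdδ : dist t t₀ < δ := lt_of_lt_of_le hdist (min_le_left _ _)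
  have hd1 : dist t t₀ < 1 := lt_of_lt_of_le hdist (min_le_right _ _)
  have key : ∀ u v : ℝ, 0 ≤ u → u ≤ v → v ≤ t₀ + 1 → v - u < δ →
      sSup (g '' Icc 0 v) ≤ sSup (g '' Icc 0 u) + ε/2 := by
    intro u v hu huv hv hd
    refine csSup_le ((nonempty_Icc.mpr (le_trans hu huv)).image _) ?_
    rintro x ⟨s, hs, rfl⟩
    rcases le_or_gt s u with hsu | hsu
    · have h := le_csSup (hbdd u) (⟨s, ⟨hs.1, hsu⟩, rfl⟩ :
        g s ∈ g '' Icc 0 u)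
      linarith
    · have hsK : s ∈ Icc (0:ℝ) (t₀+1) := ⟨hs.1, le_trans hs.2 hv⟩
      have huK : u ∈ Icc (0:ℝ) (t₀+1) := ⟨hu, by linarith⟩
      have hds : dist s u < δ := by
        rw [Real.dist_eq, abs_of_nonneg (by linarith)]
        have := hs.2; linarith
      have h1 : dist (g s) (g u) < ε/2 := hδ' s hsK u huK hds
      have h2 : g u ≤ sSup (g '' Icc 0 u) := le_csSup (hbdd u) ⟨u, ⟨hu, le_rfl⟩, rfl⟩
      have h3 := abs_lt.mp (by rwa [Real.dist_eq] at h1)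
      linarith [h3.2]
  rw [Real.dist_eq] at hdδ hd1 ⊢
  rcases le_total t t₀ with h | h
  · have hlo := hmono t t₀ ht h
    have hhi : sSup (g '' Icc 0 t₀) ≤ sSup (g '' Icc 0 t) + ε/2 := by
      refine key t t₀ ht h (by linarith) ?_
      rw [abs_of_nonpos (by linarith)] at hdδ; linarith
    rw [abs_lt]; constructor <;> linarith
  · have hlo := hmono t₀ t ht₀ h
    have hhi : sSup (g '' Icc 0 t) ≤ sSup (g '' Icc 0 t₀) + ε/2 := by
      refine key t₀ t ht₀ h ?_ ?_
      · rw [abs_of_nonneg (by linarith)] at hd1; linarith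
      · rw [abs_of_nonneg (by linarith)] at hdδ; linarith
    rw [abs_lt]; constructor <;> linarith

private lemma skorohodL_eq {f : ℝ → ℝ} (hf : ContinuousOn f (Ici 0)) {t : ℝ} (ht : 0 ≤ t) :
    skorohodL f t = sSup ((fun s => max 0 (-f s)) '' Icc 0 t) := by
  have hne : (Icc (0:ℝ) t).Nonempty := nonempty_Icc.mpr ht
  have hbdd1 : BddAbove ((fun s => -f s) '' Icc 0 t) := negimg_bdd hf le_rfl
  have hbdd2 : BddAbove ((fun s => max 0 (-f s)) '' Icc 0 t) :=
    (isCompact_Icc.image_of_continuousOn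
      (continuousOn_const.sup (hf.mono Icc_subset_Ici_self).neg)).bddAbove
  apply le_antisymm
  · apply max_le
    · exact le_trans (le_max_left 0 (-f 0)) (le_csSup hbdd2 ⟨0, ⟨le_rfl, ht⟩, rfl⟩)
    · refine csSup_le (hne.image _) ?_
      rintro x ⟨s, hs, rfl⟩
      exact le_trans (le_max_right 0 (-f s)) (le_csSup hbdd2 ⟨s, hs, rfl⟩)
  · refine csSup_le (hne.image _) ?_
    rintro x ⟨s, hs, rfl⟩
    exact max_le_max le_rfl (le_csSup hbdd1 ⟨s, hs, rfl⟩)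

private lemma skorohodL_continuousOn {f : ℝ → ℝ} (hf : ContinuousOn f (Ici 0)) :
    ContinuousOn (skorohodL f) (Ici 0) := by
  have h := runSup_continuousOn (g := fun s => max 0 (-f s))
    (continuousOn_const.sup (hf.neg))
  exact h.congr (fun t ht => skorohodL_eq hf ht)

private lemma uniq_le {f L K : ℝ → ℝ}
    (hLc : ContinuousOn L (Ici 0)) (hKc : ContinuousOn K (Ici 0))
    (hKpos : ∀ t ≥ 0, 0 ≤ f t + K t)
    (hL0 : L 0 = 0) (hK0 : K 0 = 0)
    (hKmono : MonotoneOn K (Ici 0))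
    (hLflat : ∀ a b, 0 ≤ a → a ≤ b → (∀ v ∈ Icc a b, 0 < f v + L v) → L b = L a) :
    ∀ t ≥ 0, L t ≤ K t := by
  intro t ht
  by_contra hlt
  push_neg at hlt
  set S := {u : ℝ | u ∈ Icc 0 t ∧ L u ≤ K u} with hS
  have hS0 : (0:ℝ) ∈ S := ⟨⟨le_rfl, ht⟩, by rw [hL0, hK0]⟩
  have hSsub : S ⊆ Icc 0 t := fun u hu => hu.1
  have hSclosed : IsClosed S := by
    have hrw : S = Icc 0 t ∩ (fun u => L u - K u) ⁻¹' Iic 0 := by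
      ext u
      simp only [hS, mem_setOf_eq, mem_inter_iff, mem_preimage, mem_Iic, sub_nonpos]
    rw [hrw]
    exact ContinuousOn.preimage_isClosed_of_isClosed
      ((hLc.mono Icc_subset_Ici_self).sub (hKc.mono Icc_subset_Ici_self))
      isClosed_Icc isClosed_Iic
  have hScompact : IsCompact S := isCompact_Icc.of_isClosed_subset hSclosed hSsub
  set s := sSup S with hsdef
  have hsS : s ∈ S := hScompact.sSup_mem ⟨0, hS0⟩
  have hs0 : 0 ≤ s := hsS.1.1
  have hst : s < t := by
    refine lt_of_le_of_ne hsS.1.2 (fun heq => ?_)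
    have := hsS.2
    rw [heq] at this
    linarith
  have hIoc : ∀ u ∈ Ioc s t, K u < L u := by
    intro u hu
    by_contra h
    push_neg at h
    have hu' : u ∈ S := ⟨⟨le_trans hs0 hu.1.le, hu.2⟩, h⟩
    exact absurd (le_csSup hScompact.bddAbove hu') (not_le.mpr hu.1)
  have hconst : ∀ a ∈ Ioc s t, L a = L t := by
    intro a ha
    refine (hLflat a t (le_trans hs0 ha.1.le) ha.2 ?_).symm
    intro v hv
    have hv' : v ∈ Ioc s t := ⟨lt_of_lt_of_le ha.1 hv.1, hv.2⟩
    have h1 := hKpos v (le_trans hs0 hv'.1.le)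
    have h2 := hIoc v hv'
    linarith
  have hne : (nhdsWithin s (Ioc s t)).NeBot := by
    rw [← mem_closure_iff_nhdsWithin_neBot, closure_Ioc hst.ne]
    exact ⟨le_rfl, hst.le⟩
  have h1 : Filter.Tendsto L (nhdsWithin s (Ioc s t)) (nhds (L s)) :=
    (hLc s hs0).mono_left (nhdsWithin_mono s (fun u hu => le_trans hs0 hu.1.le))
  have h2 : Filter.Tendsto L (nhdsWithin s (Ioc s t)) (nhds (L t)) := by
    refine Filter.Tendsto.congr' ?_ tendsto_const_nhds
    exact Filter.eventually_of_mem self_mem_nhdsWithin (fun u hu => (hconst u hu).symm)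
  have hLst : L s = L t := tendsto_nhds_unique h1 h2
  have hKst : K s ≤ K t := hKmono hs0 ht hst.le
  have := hsS.2
  linarith

/-- The classical Skorohod Lemma: `skorohodL f` satisfies the three conditions, and is the
unique continuous function doing so. -/
theorem skorohod_lemma (f : ℝ → ℝ) (hf : ContinuousOn f (Ici 0)) (hf0 : 0 ≤ f 0) :
    (ContinuousOn (skorohodL f) (Ici 0) ∧
      (∀ t ≥ 0, 0 ≤ f t + skorohodL f t) ∧
      skorohodL f 0 = 0 ∧ MonotoneOn (skorohodL f) (Ici 0) ∧
      (∀ a b, 0 ≤ a → a ≤ b → (∀ t ∈ Icc a b, 0 < f t + skorohodL f t) →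
        skorohodL f b = skorohodL f a)) ∧
    ∀ L : ℝ → ℝ, ContinuousOn L (Ici 0) →
      (∀ t ≥ 0, 0 ≤ f t + L t) → L 0 = 0 → MonotoneOn L (Ici 0) →
      (∀ a b, 0 ≤ a → a ≤ b → (∀ t ∈ Icc a b, 0 < f t + L t) → L b = L a) →
      ∀ t ≥ 0, L t = skorohodL f t := by
  refine ⟨⟨skorohodL_continuousOn hf, skorohodL_nonneg hf, skorohodL_zero hf0,
    skorohodL_mono hf, skorohodL_flat hf⟩, ?_⟩
  intro L hLc hLpos hL0 hLmono hLflat t ht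
  refine le_antisymm ?_ ?_
  · exact uniq_le hLc (skorohodL_continuousOn hf) (skorohodL_nonneg hf) hL0
      (skorohodL_zero hf0) (skorohodL_mono hf) hLflat t ht
  · exact uniq_le (skorohodL_continuousOn hf) hLc hLpos (skorohodL_zero hf0) hL0
      hLmono (skorohodL_flat hf) t ht
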